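/- An element A ∈ T has a right inverse (for the tree product) if and only if A has exactly one leaf (i.e., A ∈ F), and A ∈ T has a left inverse if and only if some leaf of A has color 1. -/

import Mathlib

/-- The free magma `T` on the free monoid `F` on π₁, π₂: finite nonempty ordered
binary trees with leaves colored by elements of `F`. -/
inductive Tm : Type
  | leaf : FreeMonoid (Fin 2) → Tm
  | node : Tm → Tm → Tm

/-- The action of the generator πᵢ on `T`: it picks out the `i`-th subtree of a
node, and acts by left multiplication on (the color of) a single leaf. -/
def pact (i : Fin 2) : Tm → Tm
  | .leaf w => .leaf (FreeMonoid.of i * w)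
  | .node A B => if i = 0 then A else B

/-- The left action of a word `w ∈ F` on `T`, applying the symbols of `w` one at
a time from right to left. -/
def wact (w : FreeMonoid (Fin 2)) (A : Tm) : Tm :=
  (FreeMonoid.toList w).foldr pact A

/-- The product on `T`: `A * B` replaces each leaf of `A` of color `w` by `w • B`. -/
def tmul : Tm → Tm → Tm
  | .leaf w, B => wact w B
  | .node A₁ A₂, B => .node (tmul A₁ B) (tmul A₂ B)

/-- The identity of `T`: a single leaf colored by the empty word. -/
def tone : Tm := .leaf 1

/-- The list of leaves of a tree `A ∈ T`, in order, recorded as pairs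
`(path, color)`: the path from the root to the leaf is described by the word
`path` read from right to left, and `color` is the color of the leaf. -/
def tleaves : Tm → List (FreeMonoid (Fin 2) × FreeMonoid (Fin 2))
  | .leaf w => [(1, w)]
  | .node A B =>
      ((tleaves A).map fun pc => (pc.1 * FreeMonoid.of 0, pc.2)) ++
        ((tleaves B).map fun pc => (pc.1 * FreeMonoid.of 1, pc.2))

lemma lact_leaf (l : List (Fin 2)) (u : FreeMonoid (Fin 2)) :
    l.foldr pact (.leaf u) = .leaf (FreeMonoid.ofList l * u) := by
  induction l with
  | nil => simp
  | cons i l ih =>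
    simp only [List.foldr_cons, ih, pact]
    rw [← mul_assoc]
    rfl

lemma exists_lact_eq (l : List (Fin 2)) (C : Tm) : ∃ B, l.foldr pact B = C := by
  induction l generalizing C with
  | nil => exact ⟨C, rfl⟩
  | cons i l ih =>
    obtain ⟨B, hB⟩ := ih (.node C C)
    exact ⟨B, by simp [hB, pact]⟩

lemma lact_leaf_one (A : Tm) : ∀ l : List (Fin 2), l.foldr pact A = .leaf 1 →
    ∃ pc ∈ tleaves A, pc.2 = 1 := by
  induction A with
  | leaf u =>
    intro l h
    rw [lact_leaf] at h
    injection h with h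
    have hu : u = 1 := by
      have := congrArg FreeMonoid.toList h
      exact FreeMonoid.toList.injective (by simpa using this : l = [] ∧ FreeMonoid.toList u = []).2
    exact ⟨(1, u), by simp [tleaves], hu⟩
  | node X Y ihX ihY =>
    intro l h
    rcases l.eq_nil_or_concat with rfl | ⟨l', i, rfl⟩
    · simp at h
    · rw [List.concat_eq_append, List.foldr_append] at h
      simp only [List.foldr_cons, List.foldr_nil, pact] at h
      by_cases hi : i = 0
      · rw [if_pos hi] at h
        obtain ⟨pc, hmem, hc⟩ := ihX l' h
        exact ⟨(pc.1 * FreeMonoid.of 0, pc.2), by simp [tleaves]; exact Or.inl hmem, hc⟩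
      · rw [if_neg hi] at h
        obtain ⟨pc, hmem, hc⟩ := ihY l' h
        exact ⟨(pc.1 * FreeMonoid.of 1, pc.2), by simp [tleaves]; exact Or.inr hmem, hc⟩

lemma wact_tleaves (A : Tm) : ∀ pc ∈ tleaves A, wact pc.1 A = .leaf pc.2 := by
  induction A with
  | leaf u => intro pc hpc; simp [tleaves] at hpc; subst hpc; simp [wact]
  | node X Y ihX ihY =>
    intro pc hpc
    simp only [tleaves, List.mem_append, List.mem_map] at hpc
    rcases hpc with ⟨qc, hq, rfl⟩ | ⟨qc, hq, rfl⟩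
    · have := ihX qc hq
      simp only [wact] at this ⊢
      rw [show FreeMonoid.toList (qc.1 * FreeMonoid.of 0) = FreeMonoid.toList qc.1 ++ [0] from rfl,
        List.foldr_append]
      simpa [pact] using this
    · have := ihY qc hq
      simp only [wact] at this ⊢
      rw [show FreeMonoid.toList (qc.1 * FreeMonoid.of 1) = FreeMonoid.toList qc.1 ++ [1] from rfl,
        List.foldr_append]
      simpa [pact] using this

/-- `A ∈ T` has a right inverse iff `A` is a single leaf, and a left inverse
iff some leaf of `A` has color `1`. -/
theorem tm_invertibility (A : Tm) :
    ((∃ B : Tm, tmul A B = tone) ↔ ∃ w, A = .leaf w) ∧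
      ((∃ B : Tm, tmul B A = tone) ↔ ∃ pc ∈ tleaves A, pc.2 = 1) := by
  constructor
  · constructor
    · rintro ⟨B, hB⟩
      cases A with
      | leaf w => exact ⟨w, rfl⟩
      | node A₁ A₂ => simp [tmul, tone] at hB
    · rintro ⟨w, rfl⟩
      obtain ⟨B, hB⟩ := exists_lact_eq (FreeMonoid.toList w) (.leaf 1)
      exact ⟨B, hB⟩
  · constructor
    · rintro ⟨B, hB⟩
      cases B with
      | leaf w => exact lact_leaf_one A (FreeMonoid.toList w) hB
      | node B₁ B₂ => simp [tmul, tone] at hB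
    · rintro ⟨pc, hmem, hc⟩
      exact ⟨.leaf pc.1, by simp [tmul, wact_tleaves A pc hmem, hc, tone]⟩
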